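/- The optimal value of the following semidefinite program equals 3/4: maximize ⟨τ, Q⟩ over density matrices τ on Y ⊗ A₀ ⊗ A₁ ⊗ Z = ℂ² ⊗ ℂ³ ⊗ ℂ³ ⊗ ℂ², subject to Tr_Z(τ) = Tr_{B₀,B₁}(|ψ⟩⟨ψ|), where |ψ⟩ = Σ_{y∈{0,1}} (1/√2)|y⟩_Y ⊗ |φ_y⟩_{A₀⊗B₀} ⊗ |φ_y⟩_{A₁⊗B₁} and Q = 1_Y ⊗ 1_{A₀} ⊗ (|0⟩⟨0| + |1⟩⟨1|)_{A₁} ⊗ |0⟩⟨0|_Z + 1_Y ⊗ (|0⟩⟨0| + |1⟩⟨1|)_{A₀} ⊗ 1_{A₁} ⊗ |1⟩⟨1|_Z. (This is the optimal probability with which a cheating Bob forces outcome 0 in the EPR-based weak coin flipping protocol.) -/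

import Mathlib

/-! STATEMENT 3: Bob's optimal cheating probability (forcing outcome 0) in the EPR-based weak coin flipping protocol equals 3/4. -/

open Matrix
open scoped Matrix BigOperators ComplexOrder

noncomputable section

/-- Square matrices over ℂ indexed by `α`. -/
abbrev Mat (α : Type) : Type := Matrix α α ℂ

/-- A density matrix: positive semidefinite with unit trace. -/
def IsDensity {α : Type} [Fintype α] [DecidableEq α] (ρ : Mat α) : Prop :=
  ρ.PosSemidef ∧ ρ.trace = 1

/-- Hilbert–Schmidt inner product ⟨P, Q⟩ = Tr(P† Q). -/
def hs {α : Type} [Fintype α] (P Q : Mat α) : ℂ := (Pᴴ * Q).trace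

/-- Outer product |v⟩⟨v|. -/
def outer {α : Type} (v : α → ℂ) : Mat α := fun i j => v i * star (v j)

/-- Standard basis vector |i⟩. -/
def ket {α : Type} [DecidableEq α] (i : α) : α → ℂ := fun j => if j = i then 1 else 0

/-- The embedding of Fin 2 into Fin 3. -/
def f23 (y : Fin 2) : Fin 3 := ⟨y.val, by omega⟩

/-- |φ_y⟩ = (|yy⟩ + |22⟩)/√2 ∈ ℂ³ ⊗ ℂ³. -/
def phi (y : Fin 2) : Fin 3 × Fin 3 → ℂ :=
  fun p => (ket (f23 y, f23 y) p + ket ((2 : Fin 3), (2 : Fin 3)) p) / (Real.sqrt 2 : ℂ)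

/-- Partial trace over the first tensor factor. -/
def ptrA {α β : Type} [Fintype α] (ρ : Mat (α × β)) : Mat β :=
  fun b b' => ∑ a, ρ (a, b) (a, b')

/-- Index for Y ⊗ A₀ ⊗ B₀ ⊗ A₁ ⊗ B₁. -/
abbrev I5 : Type := Fin 2 × Fin 3 × Fin 3 × Fin 3 × Fin 3

/-- |ψ⟩ = Σ_y (1/√2)|y⟩_Y ⊗ |φ_y⟩_{A₀⊗B₀} ⊗ |φ_y⟩_{A₁⊗B₁}. -/
def psiW : I5 → ℂ := fun p =>
  match p with
  | (y, a0, b0, a1, b1) => phi y (a0, b0) * phi y (a1, b1) / (Real.sqrt 2 : ℂ)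

/-- Partial trace over B₀ and B₁, onto Y ⊗ A₀ ⊗ A₁. -/
def trB01 (ρ : Mat I5) : Mat (Fin 2 × Fin 3 × Fin 3) :=
  fun p q => ∑ b0, ∑ b1,
    ρ (p.1, p.2.1, b0, p.2.2, b1) (q.1, q.2.1, b0, q.2.2, b1)

/-- Partial trace over Z, the last factor of Y ⊗ A₀ ⊗ A₁ ⊗ Z. -/
def trZ (τ : Mat (Fin 2 × Fin 3 × Fin 3 × Fin 2)) : Mat (Fin 2 × Fin 3 × Fin 3) :=
  fun p q => ∑ z, τ (p.1, p.2.1, p.2.2, z) (q.1, q.2.1, q.2.2, z)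

/-- Q = 1_Y ⊗ 1_{A₀} ⊗ (|0⟩⟨0|+|1⟩⟨1|)_{A₁} ⊗ |0⟩⟨0|_Z
      + 1_Y ⊗ (|0⟩⟨0|+|1⟩⟨1|)_{A₀} ⊗ 1_{A₁} ⊗ |1⟩⟨1|_Z. -/
def Qw : Mat (Fin 2 × Fin 3 × Fin 3 × Fin 2) := fun p q =>
  match p, q with
  | (y, a0, a1, z), (y', a0', a1', z') =>
    (if y = y' then 1 else 0) * (if a0 = a0' then 1 else 0) *
      (ket (0 : Fin 3) a1 * star (ket (0 : Fin 3) a1')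
        + ket (1 : Fin 3) a1 * star (ket (1 : Fin 3) a1')) *
      (ket (0 : Fin 2) z * star (ket (0 : Fin 2) z'))
    + (if y = y' then 1 else 0) *
      (ket (0 : Fin 3) a0 * star (ket (0 : Fin 3) a0')
        + ket (1 : Fin 3) a0 * star (ket (1 : Fin 3) a0')) *
      (if a1 = a1' then 1 else 0) *
      (ket (1 : Fin 2) z * star (ket (1 : Fin 2) z'))

/-! ### Auxiliary machinery -/

lemma outer_posSemidef {α : Type} [Fintype α] [DecidableEq α] (v : α → ℂ) :
    (outer v).PosSemidef := by
  have h : outer v = (Matrix.replicateRow Unit (star v))ᴴ * Matrix.replicateRow Unit (star v) := by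
    ext i j
    simp [outer, Matrix.mul_apply, Matrix.replicateRow_apply, Matrix.conjTranspose_apply, mul_comm]
  rw [h]
  exact Matrix.posSemidef_conjTranspose_mul_self _

lemma diag_nonneg' {α : Type} [Fintype α] [DecidableEq α] {M : Mat α} (h : M.PosSemidef)
    (i : α) : 0 ≤ M i i := h.diag_nonneg

/-- natural-number numerator of psiW -/
def nn : I5 → ℕ := fun p =>
  ((if (p.2.1, p.2.2.1) = (f23 p.1, f23 p.1) then 1 else 0) +
   (if (p.2.1, p.2.2.1) = ((2:Fin 3), (2:Fin 3)) then 1 else 0)) *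
  ((if (p.2.2.2.1, p.2.2.2.2) = (f23 p.1, f23 p.1) then 1 else 0) +
   (if (p.2.2.2.1, p.2.2.2.2) = ((2:Fin 3), (2:Fin 3)) then 1 else 0))

lemma sqrt2_sq : ((Real.sqrt 2 : ℝ) : ℂ) * ((Real.sqrt 2 : ℝ) : ℂ) = 2 := by
  norm_cast
  exact Real.mul_self_sqrt (by norm_num)

lemma sqrt2_ne : ((Real.sqrt 2 : ℝ) : ℂ) ≠ 0 :=
  Complex.ofReal_ne_zero.mpr (by positivity)

lemma psiW_eq (p : I5) : psiW p = (nn p : ℂ) / (2 * ((Real.sqrt 2 : ℝ) : ℂ)) := by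
  obtain ⟨y, a0, b0, a1, b1⟩ := p
  show phi y (a0, b0) * phi y (a1, b1) / _ = _
  have hnum : (ket (f23 y, f23 y) (a0, b0) + ket ((2:Fin 3), (2:Fin 3)) (a0, b0)) *
      (ket (f23 y, f23 y) (a1, b1) + ket ((2:Fin 3), (2:Fin 3)) (a1, b1))
      = (nn (y, a0, b0, a1, b1) : ℂ) := by
    simp only [ket, nn]
    push_cast
    ring
  rw [phi, phi]
  rw [div_mul_div_comm, div_div, ← hnum]
  congr 1
  rw [mul_assoc, sqrt2_sq]
  ring

lemma psiW_real (p : I5) : star (psiW p) = psiW p := by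
  rw [psiW_eq]
  simp [star_div₀, Complex.star_def, Complex.conj_ofReal]

lemma psi_mul (p q : I5) : psiW p * star (psiW q) = ((nn p * nn q : ℕ) : ℂ) / 8 := by
  rw [psiW_real, psiW_eq, psiW_eq, div_mul_div_comm]
  push_cast
  congr 1
  rw [show (2 * ((Real.sqrt 2 : ℝ) : ℂ)) * (2 * ((Real.sqrt 2 : ℝ) : ℂ))
      = 4 * (((Real.sqrt 2 : ℝ) : ℂ) * ((Real.sqrt 2 : ℝ) : ℂ)) by ring, sqrt2_sq]
  norm_num

lemma psi_mul' (p q : I5) : psiW p * psiW q = ((nn p * nn q : ℕ) : ℂ) / 8 := by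
  rw [← psiW_real q]; exact psi_mul p q

/-- selector for Bob's measurement: z=0 ↔ a₁ ∈ {0,1} -/
def selN : Fin 2 → Fin 3 → ℕ := fun z a =>
  if z = 0 then (if a.val ≤ 1 then 1 else 0) else (if a = 2 then 1 else 0)

def wv : (Fin 3 × Fin 3) × Fin 2 → (Fin 2 × Fin 3 × Fin 3 × Fin 2) → ℂ :=
  fun w p => (if p.2.2.2 = w.2 then 1 else 0) * (selN w.2 p.2.2.1 : ℂ) *
    psiW (p.1, p.2.1, w.1.1, p.2.2.1, w.1.2)

def tau : Mat (Fin 2 × Fin 3 × Fin 3 × Fin 2) := ∑ w, outer (wv w)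

def NS : (Fin 2 × Fin 3 × Fin 3) → (Fin 2 × Fin 3 × Fin 3) → ℕ :=
  fun p q => ∑ b : Fin 3 × Fin 3,
    nn (p.1, p.2.1, b.1, p.2.2, b.2) * nn (q.1, q.2.1, b.1, q.2.2, b.2)

lemma wv_real (w : (Fin 3 × Fin 3) × Fin 2) (p : Fin 2 × Fin 3 × Fin 3 × Fin 2) :
    star (wv w p) = wv w p := by
  simp only [wv, star_mul', star_natCast, psiW_real, apply_ite (star : ℂ → ℂ),
    star_one, star_zero]

lemma tau_posSemidef : tau.PosSemidef := by
  rw [tau]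
  classical
  induction (Finset.univ : Finset ((Fin 3 × Fin 3) × Fin 2)) using Finset.induction_on with
  | empty => simpa using Matrix.PosSemidef.zero
  | insert _ _ hx ih =>
      rw [Finset.sum_insert hx]
      exact (outer_posSemidef _).add ih

lemma sum_block (y y' : Fin 2) (a0 a0' a1 a1' : Fin 3) (c c' : ℕ) :
    ∑ x : Fin 3 × Fin 3,
      (c : ℂ) * psiW (y, a0, x.1, a1, x.2) * ((c' : ℂ) * psiW (y', a0', x.1, a1', x.2))
    = ((c * c' * NS (y, a0, a1) (y', a0', a1') : ℕ) : ℂ) / 8 := by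
  push_cast [NS]
  rw [Finset.mul_sum, Finset.sum_div]
  refine Finset.sum_congr rfl fun b _ => ?_
  rw [show (c : ℂ) * psiW (y, a0, b.1, a1, b.2) * ((c' : ℂ) * psiW (y', a0', b.1, a1', b.2))
      = ((c : ℂ) * (c' : ℂ)) * (psiW (y, a0, b.1, a1, b.2) * psiW (y', a0', b.1, a1', b.2)) by
      ring, psi_mul']
  push_cast
  ring

lemma tau_apply (y y' : Fin 2) (a0 a1 a0' a1' : Fin 3) (z z' : Fin 2) :
    tau (y, a0, a1, z) (y', a0', a1', z') =
      (if z = z' then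
        ((selN z a1 * selN z a1' * NS (y, a0, a1) (y', a0', a1') : ℕ) : ℂ) else 0) / 8 := by
  rw [tau, Matrix.sum_apply]
  simp only [outer, wv_real]
  simp only [wv]
  rw [Fintype.sum_prod_type]
  simp only [Fin.sum_univ_two]
  fin_cases z <;> fin_cases z'
  · simpa using sum_block y y' a0 a0' a1 a1' (selN 0 a1) (selN 0 a1')
  · simp
  · simp
  · simpa using sum_block y y' a0 a0' a1 a1' (selN 1 a1) (selN 1 a1')

/-- diagonal weight of Q -/
def qd : Fin 2 × Fin 3 × Fin 3 × Fin 2 → ℕ := fun p =>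
  if p.2.2.2 = 0 then (if p.2.2.1 = 0 ∨ p.2.2.1 = 1 then 1 else 0)
  else (if p.2.1 = 0 ∨ p.2.1 = 1 then 1 else 0)

def Qn : (Fin 2 × Fin 3 × Fin 3 × Fin 2) → (Fin 2 × Fin 3 × Fin 3 × Fin 2) → ℕ := fun p q =>
  match p, q with
  | (y, a0, a1, z), (y', a0', a1', z') =>
    (if y = y' then 1 else 0) * (if a0 = a0' then 1 else 0) *
      ((if a1 = 0 then 1 else 0) * (if a1' = 0 then 1 else 0)
        + (if a1 = 1 then 1 else 0) * (if a1' = 1 then 1 else 0)) *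
      ((if z = 0 then 1 else 0) * (if z' = 0 then 1 else 0))
    + (if y = y' then 1 else 0) *
      ((if a0 = 0 then 1 else 0) * (if a0' = 0 then 1 else 0)
        + (if a0 = 1 then 1 else 0) * (if a0' = 1 then 1 else 0)) *
      (if a1 = a1' then 1 else 0) *
      ((if z = 1 then 1 else 0) * (if z' = 1 then 1 else 0))

lemma Qw_cast (p q : Fin 2 × Fin 3 × Fin 3 × Fin 2) : Qw p q = (Qn p q : ℂ) := by
  obtain ⟨y, a0, a1, z⟩ := p; obtain ⟨y', a0', a1', z'⟩ := q
  simp only [Qw, Qn, ket, apply_ite (star : ℂ → ℂ), star_one, star_zero]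
  push_cast
  ring

lemma Qn_diag : ∀ p q, Qn p q = if p = q then qd p else 0 := by decide

lemma hs_eq (τ : Mat (Fin 2 × Fin 3 × Fin 3 × Fin 2)) (hH : τ.IsHermitian) :
    hs τ Qw = ∑ i, (qd i : ℂ) * τ i i := by
  rw [hs, Matrix.trace, show τᴴ = τ from hH]
  simp only [Matrix.diag_apply, Matrix.mul_apply]
  refine Finset.sum_congr rfl fun i _ => ?_
  rw [Finset.sum_eq_single i]
  · rw [Qw_cast, Qn_diag]; simp [mul_comm]
  · intro j _ hj; rw [Qw_cast, Qn_diag]; simp [hj]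
  · simp

lemma RApp (p q : Fin 2 × Fin 3 × Fin 3) :
    trB01 (outer psiW) p q = (NS p q : ℂ) / 8 := by
  obtain ⟨y, a0, a1⟩ := p; obtain ⟨y', a0', a1'⟩ := q
  show (∑ b0, ∑ b1, outer psiW (y, a0, b0, a1, b1) (y', a0', b0, a1', b1)) = _
  simp only [outer, psi_mul]
  rw [show ((NS (y, a0, a1) (y', a0', a1') : ℕ) : ℂ)
      = ∑ b0 : Fin 3, ∑ b1 : Fin 3,
        ((nn (y, a0, b0, a1, b1) * nn (y', a0', b0, a1', b1) : ℕ) : ℂ) by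
    push_cast [NS, Fintype.sum_prod_type]; rfl]
  simp [Finset.sum_div]

lemma key_sel : ∀ p q : Fin 2 × Fin 3 × Fin 3,
    (selN 0 p.2.2 * selN 0 q.2.2 + selN 1 p.2.2 * selN 1 q.2.2) * NS p q = NS p q := by
  decide

lemma trZ_tau : trZ tau = trB01 (outer psiW) := by
  funext p q
  obtain ⟨y, a0, a1⟩ := p; obtain ⟨y', a0', a1'⟩ := q
  rw [RApp]
  show (∑ z, tau (y, a0, a1, z) (y', a0', a1', z)) = _
  rw [Fin.sum_univ_two, tau_apply, tau_apply, if_pos rfl, if_pos rfl]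
  conv_rhs => rw [← key_sel (y, a0, a1) (y', a0', a1')]
  push_cast
  ring

lemma tau_trace : tau.trace = 1 := by
  have hN : (∑ i : Fin 2 × Fin 3 × Fin 3 × Fin 2,
      selN i.2.2.2 i.2.2.1 * selN i.2.2.2 i.2.2.1 *
        NS (i.1, i.2.1, i.2.2.1) (i.1, i.2.1, i.2.2.1)) = 8 := by decide
  rw [Matrix.trace]
  have h : ∀ i : Fin 2 × Fin 3 × Fin 3 × Fin 2, tau.diag i =
      ((selN i.2.2.2 i.2.2.1 * selN i.2.2.2 i.2.2.1 *
        NS (i.1, i.2.1, i.2.2.1) (i.1, i.2.1, i.2.2.1) : ℕ) : ℂ) / 8 := by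
    intro i; obtain ⟨y, a0, a1, z⟩ := i
    rw [Matrix.diag_apply, tau_apply, if_pos rfl]
  rw [Finset.sum_congr rfl fun i _ => h i, ← Finset.sum_div, ← Nat.cast_sum, hN]
  norm_num

lemma hs_dec : (∑ i : Fin 2 × Fin 3 × Fin 3 × Fin 2,
    qd i * (selN i.2.2.2 i.2.2.1 * selN i.2.2.2 i.2.2.1 *
      NS (i.1, i.2.1, i.2.2.1) (i.1, i.2.1, i.2.2.1))) = 6 := by decide

lemma tau_hs : hs tau Qw = ((3 / 4 : ℝ) : ℂ) := by
  rw [hs_eq tau tau_posSemidef.1]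
  have h : ∀ i : Fin 2 × Fin 3 × Fin 3 × Fin 2, (qd i : ℂ) * tau i i =
      ((qd i * (selN i.2.2.2 i.2.2.1 * selN i.2.2.2 i.2.2.1 *
        NS (i.1, i.2.1, i.2.2.1) (i.1, i.2.1, i.2.2.1)) : ℕ) : ℂ) / 8 := by
    intro i; obtain ⟨y, a0, a1, z⟩ := i
    rw [tau_apply, if_pos rfl]
    push_cast
    ring
  rw [Finset.sum_congr rfl fun i _ => h i, ← Finset.sum_div, ← Nat.cast_sum, hs_dec]
  norm_num

def wN : Fin 3 → Fin 3 → ℕ := fun a0 a1 => if a0.val ≤ 1 ∨ a1.val ≤ 1 then 1 else 0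

lemma qd_le : ∀ (y : Fin 2) (a0 a1 : Fin 3) (z : Fin 2), qd (y, a0, a1, z) ≤ wN a0 a1 := by
  decide

lemma w_dec : (∑ y : Fin 2, ∑ a0 : Fin 3, ∑ a1 : Fin 3,
    wN a0 a1 * NS (y, a0, a1) (y, a0, a1)) = 6 := by decide

lemma natdiv8re (N : ℕ) : (((N : ℂ)) / 8).re = (N : ℝ) / 8 := by
  rw [show ((N : ℂ)) / 8 = (((N : ℝ) / 8 : ℝ) : ℂ) by push_cast; ring, Complex.ofReal_re]

theorem weak_coin_flipping_cheating_Bob :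
    IsGreatest
      {x : ℝ | ∃ τ : Mat (Fin 2 × Fin 3 × Fin 3 × Fin 2),
        IsDensity τ ∧ trZ τ = trB01 (outer psiW) ∧
        x = (hs τ Qw).re}
      (3/4) := by
  constructor
  · exact ⟨tau, ⟨tau_posSemidef, tau_trace⟩, trZ_tau, by rw [tau_hs, Complex.ofReal_re]⟩
  · rintro x ⟨τ, ⟨hpsd, -⟩, hc, rfl⟩
    rw [hs_eq τ hpsd.1, Complex.re_sum]
    have hre : ∀ i : Fin 2 × Fin 3 × Fin 3 × Fin 2,
        ((qd i : ℂ) * τ i i).re = (qd i : ℝ) * (τ i i).re := by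
      intro i; simp [Complex.mul_re]
    simp only [hre, Fintype.sum_prod_type]
    have key : ∀ (y : Fin 2) (a0 a1 : Fin 3),
        (∑ z : Fin 2, (qd (y, a0, a1, z) : ℝ) * (τ (y, a0, a1, z) (y, a0, a1, z)).re)
        ≤ (wN a0 a1 : ℝ) * ((NS (y, a0, a1) (y, a0, a1) : ℝ) / 8) := by
      intro y a0 a1
      have ht : ∀ z : Fin 2, 0 ≤ (τ (y, a0, a1, z) (y, a0, a1, z)).re := by
        intro z
        have := (Complex.le_def.mp (diag_nonneg' hpsd (y, a0, a1, z))).1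
        simpa using this
      have hsum : (τ (y, a0, a1, 0) (y, a0, a1, 0)).re + (τ (y, a0, a1, 1) (y, a0, a1, 1)).re
          = (NS (y, a0, a1) (y, a0, a1) : ℝ) / 8 := by
        have h2 := congrFun (congrFun hc (y, a0, a1)) (y, a0, a1)
        rw [RApp] at h2
        have h3 := congrArg Complex.re h2
        simp only [trZ, Fin.sum_univ_two, Complex.add_re, natdiv8re] at h3
        exact h3
      have hq : ∀ z : Fin 2, (qd (y, a0, a1, z) : ℝ) ≤ (wN a0 a1 : ℝ) := by
        intro z; exact_mod_cast qd_le y a0 a1 z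
      rw [Fin.sum_univ_two]
      calc (qd (y, a0, a1, 0) : ℝ) * (τ (y, a0, a1, 0) (y, a0, a1, 0)).re
            + (qd (y, a0, a1, 1) : ℝ) * (τ (y, a0, a1, 1) (y, a0, a1, 1)).re
          ≤ (wN a0 a1 : ℝ) * (τ (y, a0, a1, 0) (y, a0, a1, 0)).re
            + (wN a0 a1 : ℝ) * (τ (y, a0, a1, 1) (y, a0, a1, 1)).re :=
            add_le_add (mul_le_mul_of_nonneg_right (hq 0) (ht 0))
              (mul_le_mul_of_nonneg_right (hq 1) (ht 1))
        _ = (wN a0 a1 : ℝ) * ((τ (y, a0, a1, 0) (y, a0, a1, 0)).re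
            + (τ (y, a0, a1, 1) (y, a0, a1, 1)).re) := by ring
        _ = (wN a0 a1 : ℝ) * ((NS (y, a0, a1) (y, a0, a1) : ℝ) / 8) := by rw [hsum]
    refine le_trans (Finset.sum_le_sum fun y _ => Finset.sum_le_sum fun a0 _ =>
      Finset.sum_le_sum fun a1 _ => key y a0 a1) ?_
    have h6 : (∑ y : Fin 2, ∑ a0 : Fin 3, ∑ a1 : Fin 3,
        (wN a0 a1 : ℝ) * ((NS (y, a0, a1) (y, a0, a1) : ℝ) / 8))
        = ((∑ y : Fin 2, ∑ a0 : Fin 3, ∑ a1 : Fin 3,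
          wN a0 a1 * NS (y, a0, a1) (y, a0, a1) : ℕ) : ℝ) / 8 := by
      push_cast
      simp only [← mul_div_assoc, ← Finset.sum_div]
    rw [h6, w_dec]
    norm_num

end
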